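/- Let O be a Noetherian local ring and I an ideal with a minimal free presentation Λ^2 U -> U -> I -> 0 coming from a Koszul complex on a regular sequence generating I (U free of rank e). Suppose instead I has an arbitrary free presentation of the form (Λ^2 U ⊕ A ⊕ B) -> (U ⊕ A) -> I -> 0 where A maps to zero in I, B maps to zero in U ⊕ A, and the left map restricts to the identity on A. Then for every a >= 1 the induced sequence S^{a-1}(U ⊕ A) ⊗ (Λ^2 U ⊕ A) -> S^a(U ⊕ A) -> I^a -> 0 is exact. -/

import Mathlib

/-!
Powers of an arbitrary presentation of a regular-sequence ideal (local statement behind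
Lemma 1.4 of Ein–Hà–Lazarsfeld).  Let `O` be a Noetherian local ring, `I = (g₁,…,g_e)` an
ideal generated by a regular sequence, with minimal Koszul presentation
`Λ²U → U → I → 0`, `U = O^e`.  Consider an arbitrary free presentation
`(Λ²U ⊕ A ⊕ B) → (U ⊕ A) → I → 0` where `A = O^m` maps to zero in `I`, `B` maps to zero
in `U ⊕ A`, and the left-hand map restricts to the identity on `A`.  Identifying
`Sᵃ(U ⊕ A)` with the homogeneous degree-`a` part of `O[Xᵢ : i ∈ Fin e ⊕ Fin m]`, the map
`Sᵃ(U ⊕ A) → Iᵃ` with evaluation `X_(inl i) ↦ g_i`, `X_(inr j) ↦ 0`, and the image of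
`S^{a-1}(U ⊕ A) ⊗ (Λ²U ⊕ A) → Sᵃ(U ⊕ A)` with the `O`-span of the elements
`u·(g_j·X_(inl i) - g_i·X_(inl j))` and `u·X_(inr j)` (`u` homogeneous of degree `a-1`),
the induced sequence `S^{a-1}(U ⊕ A) ⊗ (Λ²U ⊕ A) → Sᵃ(U ⊕ A) → Iᵃ → 0` is exact for
every `a ≥ 1`.
-/

open MvPolynomial

noncomputable section

namespace EHL
universe u
variable {O : Type u} [CommRing O]

/-- Koszul relation span in degree `a`. -/
def Ksp {n : ℕ} (g : Fin n → O) (a : ℕ) : Submodule O (MvPolynomial (Fin n) O) :=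
  Submodule.span O {q | ∃ u : MvPolynomial (Fin n) O, u.IsHomogeneous (a - 1) ∧
    ∃ i j, q = u * (C (g j) * X i - C (g i) * X j)}

lemma degree_of_mem_support {σ : Type*} {F : MvPolynomial σ O} {a : ℕ} {d : σ →₀ ℕ}
    (h : F.IsHomogeneous a) (hd : d ∈ F.support) : d.degree = a := by
  have := h (mem_support_iff.mp hd)
  rw [Finsupp.degree_eq_weight_one]; exact this

lemma Ksp_le_homog {n : ℕ} (g : Fin n → O) {a : ℕ} (ha : 1 ≤ a) :
    Ksp g a ≤ homogeneousSubmodule (Fin n) O a := by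
  rw [Ksp, Submodule.span_le]
  rintro q ⟨u, hu, i, j, rfl⟩
  rw [SetLike.mem_coe, mem_homogeneousSubmodule]
  have h1 : ((C (g j) * X i - C (g i) * X j : MvPolynomial (Fin n) O)).IsHomogeneous 1 :=
    (isHomogeneous_C_mul_X _ _).sub (isHomogeneous_C_mul_X _ _)
  have := hu.mul h1
  rwa [Nat.sub_add_cancel ha] at this

lemma aeval_Ksp {n : ℕ} {g : Fin n → O} {a : ℕ} {p : MvPolynomial (Fin n) O}
    (hp : p ∈ Ksp g a) : aeval g p = 0 := by
  have : Ksp g a ≤ LinearMap.ker (aeval g).toLinearMap := by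
    rw [Ksp, Submodule.span_le]
    rintro q ⟨u, hu, i, j, rfl⟩
    simp only [SetLike.mem_coe, LinearMap.mem_ker, AlgHom.toLinearMap_apply, map_mul, map_sub,
      aeval_C, aeval_X]
    simp only [Algebra.algebraMap_self, RingHom.id_apply]
    ring
  simpa using this hp

lemma mul_Ksp {n : ℕ} {g : Fin n → O} {a k : ℕ} (ha : 1 ≤ a) {u p : MvPolynomial (Fin n) O}
    (hu : u.IsHomogeneous k) (hp : p ∈ Ksp g a) : u * p ∈ Ksp g (a + k) := by
  induction hp using Submodule.span_induction with
  | mem q hq =>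
    obtain ⟨v, hv, i, j, rfl⟩ := hq
    refine Submodule.subset_span ⟨u * v, ?_, i, j, by ring⟩
    have := hu.mul hv
    have hk : k + (a - 1) = a + k - 1 := by omega
    rwa [hk] at this
  | zero => simpa using (Ksp g (a+k)).zero_mem
  | add x y _ _ hx hy => rw [mul_add]; exact (Ksp g (a+k)).add_mem hx hy
  | smul c x _ hx => rw [mul_smul_comm]; exact (Ksp g (a+k)).smul_mem c hx

lemma rename_Ksp {n : ℕ} {g : Fin (n+1) → O} {a : ℕ} {p : MvPolynomial (Fin n) O}
    (hp : p ∈ Ksp (fun i => g i.succ) a) : rename Fin.succ p ∈ Ksp g a := by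
  induction hp using Submodule.span_induction with
  | mem q hq =>
    obtain ⟨v, hv, i, j, rfl⟩ := hq
    refine Submodule.subset_span ⟨rename Fin.succ v, hv.rename_isHomogeneous, i.succ, j.succ, ?_⟩
    simp [map_mul, map_sub, rename_C, rename_X]
  | zero => simpa using (Ksp g a).zero_mem
  | add x y _ _ hx hy => rw [map_add]; exact (Ksp g a).add_mem hx hy
  | smul c x _ hx =>
    rw [smul_eq_C_mul, map_mul, rename_C, ← smul_eq_C_mul]
    exact (Ksp g a).smul_mem c hx

lemma exists_homog_lift {σ : Type*} {O' : Type*} [CommRing O'] {f : O →+* O'}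
    (hf : Function.Surjective f) {a : ℕ} (p' : MvPolynomial σ O') (hp' : p'.IsHomogeneous a) :
    ∃ p : MvPolynomial σ O, p.IsHomogeneous a ∧ map f p = p' := by
  classical
  refine ⟨∑ d ∈ p'.support, monomial d (hf (coeff d p')).choose, ?_, ?_⟩
  · exact IsHomogeneous.sum _ _ _ fun d hd =>
      isHomogeneous_monomial _ (degree_of_mem_support hp' hd)
  · rw [map_sum]
    conv_rhs => rw [p'.as_sum]
    refine Finset.sum_congr rfl fun d hd => ?_
    rw [map_monomial, (hf (coeff d p')).choose_spec]

lemma eq_C_mul_of_map_eq_zero {σ : Type*} {r : O} {a : ℕ} {P : MvPolynomial σ O}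
    (hP : P.IsHomogeneous a)
    (h0 : map (Ideal.Quotient.mk (Ideal.span {r})) P = 0) :
    ∃ T : MvPolynomial σ O, T.IsHomogeneous a ∧ P = C r * T := by
  classical
  have hdvd : ∀ d : σ →₀ ℕ, r ∣ coeff d P := by
    intro d
    have : Ideal.Quotient.mk (Ideal.span {r}) (coeff d P) = 0 := by
      rw [← coeff_map, h0]; simp
    rw [Ideal.Quotient.eq_zero_iff_mem, Ideal.mem_span_singleton] at this
    exact this
  refine ⟨∑ d ∈ P.support, monomial d (hdvd d).choose, ?_, ?_⟩
  · exact IsHomogeneous.sum _ _ _ fun d hd =>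
      isHomogeneous_monomial _ (degree_of_mem_support hP hd)
  · rw [Finset.mul_sum]
    conv_lhs => rw [P.as_sum]
    refine Finset.sum_congr rfl fun d hd => ?_
    rw [C_mul_monomial, ← (hdvd d).choose_spec]

lemma X_mul_monomial' {σ : Type*} (s : σ) (d : σ →₀ ℕ) (c : O) (hd : d s ≠ 0) :
    X s * monomial (d - Finsupp.single s 1) c = monomial d c := by
  have hle : Finsupp.single s 1 ≤ d := by
    rw [Finsupp.single_le_iff]; omega
  have : (d - Finsupp.single s 1) + Finsupp.single s 1 = d := tsub_add_cancel_of_le hle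
  rw [mul_comm, ← pow_one (X s : MvPolynomial σ O), ← monomial_add_single, this]

lemma degree_sub_single {σ : Type*} {d : σ →₀ ℕ} {s : σ} {a : ℕ} (hd : d s ≠ 0)
    (hdeg : d.degree = a) : (d - Finsupp.single s 1).degree = a - 1 := by
  have hle : Finsupp.single s 1 ≤ d := by rw [Finsupp.single_le_iff]; omega
  have hsum : (d - Finsupp.single s 1) + Finsupp.single s 1 = d := tsub_add_cancel_of_le hle
  have := congrArg Finsupp.degree hsum
  rw [Finsupp.degree_eq_weight_one] at this ⊢
  rw [map_add] at this
  have h1 : (Finsupp.weight (fun _ : σ => (1:ℕ))) (Finsupp.single s 1) = 1 := by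
    simp [Finsupp.weight_apply, Finsupp.sum_single_index]
  rw [Finsupp.degree_eq_weight_one] at hdeg
  omega

/-- swap lemma : `C (g 0) * T ≡ X 0 * T'` modulo the Koszul span. -/
lemma swap_lemma {n : ℕ} (g : Fin (n+1) → O) {a : ℕ} (ha : 1 ≤ a)
    {T : MvPolynomial (Fin (n+1)) O} (hT : T.IsHomogeneous a) :
    ∃ T' : MvPolynomial (Fin (n+1)) O, T'.IsHomogeneous (a - 1) ∧
      C (g 0) * T - X 0 * T' ∈ Ksp g a := by
  classical
  have hvar : ∀ d ∈ T.support, ∃ j, d j ≠ 0 := by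
    intro d hd
    by_contra h
    push_neg at h
    have hd0 : d = 0 := Finsupp.ext fun j => h j
    have hdeg := degree_of_mem_support hT hd
    rw [hd0, map_zero] at hdeg
    omega
  refine ⟨∑ d ∈ T.support.attach,
      C (g ((hvar d.1 d.2).choose)) *
        monomial (d.1 - Finsupp.single ((hvar d.1 d.2).choose) 1) (coeff d.1 T), ?_, ?_⟩
  · refine IsHomogeneous.sum _ _ _ fun d _ => ?_
    have h0 := isHomogeneous_C (Fin (n+1)) (g ((hvar d.1 d.2).choose))
    have hm : ((monomial (d.1 - Finsupp.single ((hvar d.1 d.2).choose) 1)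
        (coeff d.1 T)) : MvPolynomial (Fin (n+1)) O).IsHomogeneous (a - 1) :=
      isHomogeneous_monomial _
        (degree_sub_single (hvar d.1 d.2).choose_spec (degree_of_mem_support hT d.2))
    simpa using h0.mul hm
  · rw [Finset.mul_sum]
    have hrw : C (g 0) * T = ∑ d ∈ T.support.attach,
        C (g 0) * monomial d.1 (coeff d.1 T) := by
      rw [← Finset.mul_sum, Finset.sum_attach T.support (fun d => monomial d (coeff d T)),
        ← T.as_sum]
    rw [hrw, ← Finset.sum_sub_distrib]
    refine Submodule.sum_mem _ fun d _ => ?_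
    set j := (hvar d.1 d.2).choose with hj
    have hdj : d.1 j ≠ 0 := (hvar d.1 d.2).choose_spec
    set u : MvPolynomial (Fin (n+1)) O := monomial (d.1 - Finsupp.single j 1) (coeff d.1 T)
      with hu
    have hX : X j * u = monomial d.1 (coeff d.1 T) := X_mul_monomial' j _ _ hdj
    have key : C (g 0) * monomial d.1 (coeff d.1 T) - X 0 * (C (g j) * u)
        = u * (C (g 0) * X j - C (g j) * X 0) := by
      rw [← hX]; ring
    rw [key]
    refine Submodule.subset_span ⟨u, ?_, j, 0, by ring⟩
    exact isHomogeneous_monomial _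
      (degree_sub_single hdj (degree_of_mem_support hT d.2))

/-- pure part : a polynomial all of whose monomials only involve variables in the range of an
injective map `f` is a rename. -/
lemma exists_rename_of_support {σ τ : Type*} {f : σ → τ} (hf : Function.Injective f)
    (F : MvPolynomial τ O)
    (hF : ∀ d ∈ F.support, ∀ t, d t ≠ 0 → t ∈ Set.range f) :
    ∃ G : MvPolynomial σ O, rename f G = F := by
  classical
  refine ⟨∑ d ∈ F.support.attach,
    monomial (Finsupp.comapDomain f d.1 (hf.injOn)) (coeff d.1 F), ?_⟩
  rw [map_sum]
  have : ∀ d ∈ F.support.attach,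
      rename f (monomial (Finsupp.comapDomain f d.1 (hf.injOn)) (coeff d.1 F))
        = monomial d.1 (coeff d.1 F) := by
    intro d _
    rw [rename_monomial, Finsupp.mapDomain_comapDomain f hf]
    intro t ht
    exact hF d.1 d.2 t (Finsupp.mem_support_iff.mp ht)
  rw [Finset.sum_congr rfl this, Finset.sum_attach F.support (fun d => monomial d (coeff d F)),
    ← F.as_sum]

/-- splitting off the variable `0`. -/
lemma split_X0 {n : ℕ} {a : ℕ} (ha : 1 ≤ a) (F : MvPolynomial (Fin (n+1)) O)
    (hF : F.IsHomogeneous a) :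
    ∃ (Q : MvPolynomial (Fin (n+1)) O) (R : MvPolynomial (Fin n) O),
      Q.IsHomogeneous (a-1) ∧ R.IsHomogeneous a ∧ F = X 0 * Q + rename Fin.succ R := by
  classical
  have hsplit := Finset.sum_filter_add_sum_filter_not F.support (fun d => d 0 ≠ 0)
    (fun d => monomial d (coeff d F))
  set S1 := F.support.filter (fun d => d 0 ≠ 0) with hS1
  set S2 := F.support.filter (fun d => ¬ d 0 ≠ 0) with hS2
  set Q : MvPolynomial (Fin (n+1)) O :=
    ∑ d ∈ S1, monomial (d - Finsupp.single 0 1) (coeff d F) with hQ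
  set Rbig : MvPolynomial (Fin (n+1)) O := ∑ d ∈ S2, monomial d (coeff d F) with hRbig
  have hXQ : X 0 * Q = ∑ d ∈ S1, monomial d (coeff d F) := by
    rw [hQ, Finset.mul_sum]
    refine Finset.sum_congr rfl fun d hd => ?_
    exact X_mul_monomial' 0 d _ (Finset.mem_filter.mp hd).2
  have hFeq : F = X 0 * Q + Rbig := by
    rw [hXQ]
    conv_lhs => rw [F.as_sum]
    rw [← hsplit]
  have hRsupp : ∀ d ∈ Rbig.support, ∀ t, d t ≠ 0 → t ∈ Set.range Fin.succ := by
    intro d hd t ht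
    have hmem : d ∈ S2 := by
      by_contra hmem
      have : coeff d Rbig = 0 := by
        rw [hRbig]
        rw [coeff_sum]
        refine Finset.sum_eq_zero fun e he => ?_
        rw [coeff_monomial]
        have : e ≠ d := fun h => hmem (h ▸ he)
        simp [this]
      exact (Finsupp.mem_support_iff.mp hd) this
    have hd0 : d 0 = 0 := by
      have := (Finset.mem_filter.mp hmem).2
      omega
    have ht0 : t ≠ 0 := fun h => ht (h ▸ hd0)
    obtain ⟨i, hi⟩ := Fin.exists_succ_eq.mpr ht0
    exact ⟨i, hi⟩
  obtain ⟨R, hR⟩ := exists_rename_of_support (Fin.succ_injective n) Rbig hRsupp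
  refine ⟨Q, R, ?_, ?_, by rw [hFeq, hR]⟩
  · refine IsHomogeneous.sum _ _ _ fun d hd => ?_
    have hd' := Finset.mem_filter.mp hd
    exact isHomogeneous_monomial _
      (degree_sub_single hd'.2 (degree_of_mem_support hF hd'.1))
  · rw [← IsHomogeneous.rename_isHomogeneous_iff (Fin.succ_injective n), hR]
    refine IsHomogeneous.sum _ _ _ fun d hd => ?_
    exact isHomogeneous_monomial _
      (degree_of_mem_support hF (Finset.mem_filter.mp hd).1)

lemma homog_zero_eq_C {σ : Type*} {G : MvPolynomial σ O} (hG : G.IsHomogeneous 0) :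
    G = C (coeff 0 G) := by
  classical
  ext d
  by_cases hd : d = 0
  · subst hd; simp
  · have hdeg : d.degree ≠ 0 := fun h => hd ((Finsupp.degree_eq_zero_iff d).mp h)
    rw [hG.coeff_eq_zero hdeg, coeff_C]
    simp [Ne.symm hd]

/-- lifting membership in the Koszul span over the quotient ring. -/
lemma lift_Ksp {n : ℕ} (r : O) (g : Fin n → O) {a : ℕ}
    {x' : MvPolynomial (Fin n) (O ⧸ Ideal.span {r})}
    (hx' : x' ∈ Ksp (fun i => Ideal.Quotient.mk (Ideal.span {r}) (g i)) a) :
    ∃ x : MvPolynomial (Fin n) O, x ∈ Ksp g a ∧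
      map (Ideal.Quotient.mk (Ideal.span {r})) x = x' := by
  set mk := Ideal.Quotient.mk (Ideal.span {r})
  induction hx' using Submodule.span_induction with
  | mem q hq =>
    obtain ⟨v, hv, i, j, rfl⟩ := hq
    obtain ⟨u, hu, humap⟩ := exists_homog_lift Ideal.Quotient.mk_surjective v hv
    refine ⟨u * (C (g j) * X i - C (g i) * X j), Submodule.subset_span ⟨u, hu, i, j, rfl⟩, ?_⟩
    rw [map_mul, humap, map_sub, map_mul, map_mul, map_C, map_X, map_C, map_X]
  | zero => exact ⟨0, (Ksp g a).zero_mem, map_zero _⟩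
  | add x y _ _ hx hy =>
    obtain ⟨x₀, hx₀, hxm⟩ := hx
    obtain ⟨y₀, hy₀, hym⟩ := hy
    exact ⟨x₀ + y₀, (Ksp g a).add_mem hx₀ hy₀, by rw [map_add, hxm, hym]⟩
  | smul c x _ hx =>
    obtain ⟨x₀, hx₀, hxm⟩ := hx
    obtain ⟨c₀, rfl⟩ := Ideal.Quotient.mk_surjective c
    refine ⟨c₀ • x₀, (Ksp g a).smul_mem c₀ hx₀, ?_⟩
    rw [smul_eq_C_mul, map_mul, map_C, hxm, ← smul_eq_C_mul]

/-- recursively defined regularity predicate adapted to the induction. -/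
def MyReg : {e : ℕ} → {O : Type u} → [inst : CommRing O] → (Fin e → O) → Prop
  | 0, _, _, _ => True
  | (_+1), O, _, g => IsSMulRegular O (g 0) ∧
      MyReg (fun i => Ideal.Quotient.mk (Ideal.span {g 0}) (g i.succ))

theorem key : ∀ (e : ℕ) {O : Type u} [CommRing O] (g : Fin e → O),
    MyReg g → ∀ a : ℕ, 1 ≤ a → ∀ F : MvPolynomial (Fin e) O, F.IsHomogeneous a →
    aeval g F = 0 → F ∈ Ksp g a := by
  intro e
  induction e with
  | zero =>
    intro O _ g _ a ha F hF _
    have : F = 0 := by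
      ext d
      have hd : d = 0 := Subsingleton.elim d 0
      have : d.degree ≠ a := by rw [hd, map_zero]; omega
      rw [hF.coeff_eq_zero this, coeff_zero]
    rw [this]
    exact (Ksp g a).zero_mem
  | succ n IH =>
    intro O _ g hreg a
    induction a using Nat.strong_induction_on with
    | _ a IHa =>
      intro ha F hF h0
      obtain ⟨Q, R₀, hQ, hR₀, hFeq⟩ := split_X0 ha F hF
      set mk := Ideal.Quotient.mk (Ideal.span {g 0}) with hmk
      set g' : Fin n → O ⧸ Ideal.span {g 0} := fun i => mk (g i.succ) with hg'
      -- the evaluation of R₀ lies in (g 0)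
      have heval : aeval (fun i : Fin n => g i.succ) R₀ = - (g 0 * aeval g Q) := by
        have := h0
        rw [hFeq, map_add, map_mul, aeval_X, aeval_rename] at this
        have hcomp : (g ∘ Fin.succ) = fun i : Fin n => g i.succ := rfl
        rw [hcomp] at this
        linear_combination this
      have hevalq : aeval g' (map mk R₀) = 0 := by
        have h1 : aeval g' (map mk R₀) = mk (aeval (fun i : Fin n => g i.succ) R₀) := by
          rw [hmk, aeval_def, eval₂_map, aeval_def,
            eval₂_comp_left (Ideal.Quotient.mk (Ideal.span {g 0})) (algebraMap O O)
              (fun i => g i.succ) R₀]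
          congr 1
        rw [h1, heval, map_neg, map_mul]
        have : mk (g 0) = 0 := by
          rw [hmk, Ideal.Quotient.eq_zero_iff_mem]
          exact Ideal.subset_span rfl
        rw [this, zero_mul, neg_zero]
      have hmem : map mk R₀ ∈ Ksp g' a :=
        IH g' hreg.2 a ha (map mk R₀) (hR₀.map mk) hevalq
      obtain ⟨W, hW, hWmap⟩ := lift_Ksp (g 0) (fun i => g i.succ) hmem
      have hWhom : W.IsHomogeneous a := Ksp_le_homog _ ha hW
      have hPmap : map mk (R₀ - W) = 0 := by rw [map_sub, hWmap, sub_self]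
      obtain ⟨T, hT, hTEq⟩ := eq_C_mul_of_map_eq_zero (hR₀.sub hWhom) hPmap
      have hTr : (rename Fin.succ T).IsHomogeneous a := hT.rename_isHomogeneous
      obtain ⟨T', hT', hTK⟩ := swap_lemma g ha hTr
      -- F = X 0 * (Q + T') + (rename W + (C (g 0) * rename T - X 0 * T'))
      have hFeq2 : F = X 0 * (Q + T')
          + (rename Fin.succ W + (C (g 0) * rename Fin.succ T - X 0 * T')) := by
        have : R₀ = W + C (g 0) * T := by rw [← hTEq]; ring
        rw [hFeq, this, map_add, map_mul, rename_C]
        ring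
      have hclose : rename Fin.succ W + (C (g 0) * rename Fin.succ T - X 0 * T') ∈ Ksp g a :=
        (Ksp g a).add_mem (rename_Ksp hW) hTK
      have hG : aeval g (Q + T') = 0 := by
        have h1 : aeval g F = g 0 * aeval g (Q + T') + 0 := by
          rw [hFeq2, map_add, map_mul, aeval_X]
          rw [aeval_Ksp hclose]
        rw [h0] at h1
        have h2 : g 0 * aeval g (Q + T') = 0 := by linear_combination -h1
        have := hreg.1
        have h3 : g 0 • aeval g (Q + T') = g 0 • (0 : O) := by
          rw [smul_eq_mul, smul_eq_mul, mul_zero, h2]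
        exact this h3
      have hGhom : (Q + T').IsHomogeneous (a - 1) := hQ.add hT'
      by_cases hA : a = 1
      · -- Q + T' is a constant that evaluates to zero, hence zero
        subst hA
        have h00 : (Q + T').IsHomogeneous 0 := by simpa using hGhom
        have hC := homog_zero_eq_C h00
        have : coeff 0 (Q + T') = 0 := by
          have := hG
          rw [hC] at this
          simpa using this
        rw [hC, this, map_zero] at hFeq2
        rw [hFeq2]
        simpa using hclose
      · have ha2 : 2 ≤ a := by omega
        have hmemG : Q + T' ∈ Ksp g (a-1) :=
          IHa (a-1) (by omega) (by omega) (Q + T') hGhom hG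
        have := mul_Ksp (by omega : 1 ≤ a - 1) (isHomogeneous_X O (0 : Fin (n+1))) hmemG
        rw [show a - 1 + 1 = a by omega] at this
        rw [hFeq2]
        exact (Ksp g a).add_mem this hclose

open RingTheory.Sequence Pointwise in
lemma myReg_of_isWeaklyRegular :
    ∀ (e : ℕ) {O : Type u} [CommRing O] (g : Fin e → O),
      IsWeaklyRegular O (List.ofFn g) → MyReg g := by
  intro e
  induction e with
  | zero => intro O _ g _; trivial
  | succ n IH =>
    intro O _ g h
    rw [List.ofFn_succ, isWeaklyRegular_cons_iff'] at h
    obtain ⟨h1, h2⟩ := h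
    refine ⟨h1, ?_⟩
    apply IH
    -- transfer from `QuotSMulTop (g 0) O` to the quotient ring
    have hsub : ((g 0) • (⊤ : Submodule O O)) = (Ideal.span {g 0} : Ideal O) := by
      rw [← Submodule.ideal_span_singleton_smul, Ideal.smul_eq_mul, Ideal.mul_top]
    have hlist : (List.ofFn (fun i : Fin n => g i.succ)).map
        (Ideal.Quotient.mk (Ideal.span {g 0}))
        = List.ofFn (fun i : Fin n => Ideal.Quotient.mk (Ideal.span {g 0}) (g i.succ)) := by
      rw [List.map_ofFn]; rfl
    rw [hlist] at h2
    set l := List.ofFn (fun i : Fin n => Ideal.Quotient.mk (Ideal.span {g 0}) (g i.succ))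
    refine (AddEquiv.isWeaklyRegular_congr
      (e := (Submodule.quotEquivOfEq _ _ hsub).toAddEquiv) ?_).mp h2
    refine List.forall₂_same.mpr fun r _ x => ?_
    obtain ⟨c, rfl⟩ := Ideal.Quotient.mk_surjective r
    obtain ⟨y, rfl⟩ := Submodule.Quotient.mk_surjective _ x
    have hl : ((Ideal.Quotient.mk (Ideal.span {g 0})) c •
        (Submodule.Quotient.mk y : QuotSMulTop (g 0) O)) = Submodule.Quotient.mk (c • y) := rfl
    rw [LinearEquiv.coe_toAddEquiv, hl]
    rfl

end EHL

open EHL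


theorem symmetric_power_arbitrary_presentation_exact
    (O : Type*) [CommRing O] [IsNoetherianRing O] [IsLocalRing O]
    (e m : ℕ) (g : Fin e → O)
    (hreg : RingTheory.Sequence.IsRegular O (List.ofFn g))
    (I : Ideal O) (hI : I = Ideal.span (Set.range g))
    (a : ℕ) (ha : 1 ≤ a) :
    -- exactness at `Iᵃ` : `Sᵃ(U ⊕ A) → Iᵃ` is surjective
    (∀ y ∈ I ^ a, ∃ p : MvPolynomial (Fin e ⊕ Fin m) O,
      p.IsHomogeneous a ∧ aeval (Sum.elim g fun _ => (0 : O)) p = y) ∧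
    -- exactness at `Sᵃ(U ⊕ A)`
    (∀ p : MvPolynomial (Fin e ⊕ Fin m) O, p.IsHomogeneous a →
      (aeval (Sum.elim g fun _ => (0 : O)) p = 0 ↔
        p ∈ Submodule.span O
          {q : MvPolynomial (Fin e ⊕ Fin m) O |
            ∃ u : MvPolynomial (Fin e ⊕ Fin m) O, u.IsHomogeneous (a - 1) ∧
              ((∃ i j : Fin e,
                  q = u * (MvPolynomial.C (g j) * MvPolynomial.X (Sum.inl i)
                            - MvPolynomial.C (g i) * MvPolynomial.X (Sum.inl j))) ∨
               (∃ j : Fin m, q = u * MvPolynomial.X (Sum.inr j)))})) := by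
  classical
  set ev : MvPolynomial (Fin e ⊕ Fin m) O →ₐ[O] O := aeval (Sum.elim g fun _ => (0 : O))
    with hev
  set Sset : Set (MvPolynomial (Fin e ⊕ Fin m) O) :=
    {q : MvPolynomial (Fin e ⊕ Fin m) O |
      ∃ u : MvPolynomial (Fin e ⊕ Fin m) O, u.IsHomogeneous (a - 1) ∧
        ((∃ i j : Fin e,
            q = u * (MvPolynomial.C (g j) * MvPolynomial.X (Sum.inl i)
                      - MvPolynomial.C (g i) * MvPolynomial.X (Sum.inl j))) ∨
         (∃ j : Fin m, q = u * MvPolynomial.X (Sum.inr j)))} with hSset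
  have hkerS : Submodule.span O Sset ≤ LinearMap.ker ev.toLinearMap := by
    rw [Submodule.span_le]
    rintro q ⟨u, hu, (⟨i, j, rfl⟩ | ⟨j, rfl⟩)⟩
    · simp only [SetLike.mem_coe, LinearMap.mem_ker, AlgHom.toLinearMap_apply, hev,
        map_mul, map_sub, aeval_C, aeval_X, Sum.elim_inl]
      simp only [Algebra.algebraMap_self, RingHom.id_apply]
      ring
    · simp only [SetLike.mem_coe, LinearMap.mem_ker, AlgHom.toLinearMap_apply, hev,
        map_mul, aeval_X, Sum.elim_inr, mul_zero]
  constructor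
  · -- surjectivity
    have hmain : ∀ b : ℕ, 1 ≤ b → (I ^ b : Ideal O) ≤ Submodule.map
        (aeval (Sum.elim g fun _ => (0 : O)) :
          MvPolynomial (Fin e ⊕ Fin m) O →ₐ[O] O).toLinearMap
        (homogeneousSubmodule (Fin e ⊕ Fin m) O b) := by
      intro b hb
      induction b, hb using Nat.le_induction with
      | base =>
        rw [pow_one, hI, Ideal.span_le]
        rintro y ⟨i, rfl⟩
        exact ⟨X (Sum.inl i), isHomogeneous_X _ _, by simp⟩
      | succ b hb IHb =>
        rw [pow_succ]
        refine Ideal.mul_le.mpr fun r hr s hs => ?_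
        obtain ⟨p, hp, hpe⟩ := IHb hr
        rw [hI, ← Ideal.submodule_span_eq, Submodule.mem_span_range_iff_exists_fun] at hs
        obtain ⟨c, rfl⟩ := hs
        refine ⟨p * ∑ i, C (c i) * X (Sum.inl i), ?_, ?_⟩
        · exact (show p.IsHomogeneous b from hp).mul
            (IsHomogeneous.sum _ _ _ fun i _ => isHomogeneous_C_mul_X _ _)
        · simp only [AlgHom.toLinearMap_apply, map_mul, map_sum, aeval_C, aeval_X, Sum.elim_inl]
          rw [AlgHom.toLinearMap_apply] at hpe
          rw [hpe]
          simp [smul_eq_mul]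
    intro y hy
    obtain ⟨p, hp, hpe⟩ := hmain a ha hy
    exact ⟨p, hp, hpe⟩
  · -- exactness in the middle
    intro F hF
    constructor
    · intro h0
      -- split off the monomials involving an `inr` variable
      have hsplit := Finset.sum_filter_add_sum_filter_not F.support
        (fun d => ∃ j, d (Sum.inr j) ≠ 0) (fun d => monomial d (coeff d F))
      set S1 := F.support.filter (fun d => ∃ j, d (Sum.inr j) ≠ 0) with hS1
      set S2 := F.support.filter (fun d => ¬ ∃ j, d (Sum.inr j) ≠ 0) with hS2
      set Fbad : MvPolynomial (Fin e ⊕ Fin m) O := ∑ d ∈ S1, monomial d (coeff d F) with hFbad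
      set Fgood : MvPolynomial (Fin e ⊕ Fin m) O := ∑ d ∈ S2, monomial d (coeff d F)
        with hFgood
      have hFeq : F = Fbad + Fgood := by
        conv_lhs => rw [F.as_sum]
        rw [← hsplit]
      have hbadmem : Fbad ∈ Submodule.span O Sset := by
        refine Submodule.sum_mem _ fun d hd => ?_
        have hd' := Finset.mem_filter.mp hd
        obtain ⟨j, hj⟩ := hd'.2
        have hXm : monomial d (coeff d F) =
            monomial (d - Finsupp.single (Sum.inr j) 1) (coeff d F) * X (Sum.inr j) := by
          rw [mul_comm]
          exact (X_mul_monomial' _ _ _ hj).symm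
        rw [hXm]
        refine Submodule.subset_span ⟨_, ?_, Or.inr ⟨j, rfl⟩⟩
        exact isHomogeneous_monomial _
          (degree_sub_single hj (degree_of_mem_support hF hd'.1))
      -- the good part comes from `Fin e`
      have hgoodsupp : ∀ d ∈ Fgood.support, ∀ t, d t ≠ 0 → t ∈ Set.range (Sum.inl :
          Fin e → Fin e ⊕ Fin m) := by
        intro d hd t ht
        have hmem : d ∈ S2 := by
          by_contra hmem
          have : coeff d Fgood = 0 := by
            rw [hFgood, coeff_sum]
            refine Finset.sum_eq_zero fun e' he' => ?_
            rw [coeff_monomial]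
            have : e' ≠ d := fun h => hmem (h ▸ he')
            simp [this]
          exact (Finsupp.mem_support_iff.mp hd) this
        have hno := (Finset.mem_filter.mp hmem).2
        push_neg at hno
        match t with
        | Sum.inl i => exact ⟨i, rfl⟩
        | Sum.inr j => exact absurd (hno j) ht
      obtain ⟨G, hG⟩ := exists_rename_of_support Sum.inl_injective Fgood hgoodsupp
      have hGhom : G.IsHomogeneous a := by
        rw [← IsHomogeneous.rename_isHomogeneous_iff Sum.inl_injective, hG]
        refine IsHomogeneous.sum _ _ _ fun d hd => ?_
        exact isHomogeneous_monomial _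
          (degree_of_mem_support hF (Finset.mem_filter.mp hd).1)
      have hGeval : aeval g G = 0 := by
        have h1 : ev Fgood = 0 := by
          have h2 : ev Fbad = 0 := by
            have := hkerS hbadmem
            simpa using this
          have := h0
          rw [hFeq] at this
          rw [hev] at this ⊢
          rw [map_add] at this
          rw [hev] at h2
          rw [h2, zero_add] at this
          exact this
        rw [← hG, hev] at h1
        rw [aeval_rename] at h1
        have hco : (Sum.elim g (fun _ => (0:O)) : Fin e ⊕ Fin m → O) ∘ Sum.inl = g := rfl
        rwa [hco] at h1
      have hGmem : G ∈ Ksp g a :=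
        key e g (myReg_of_isWeaklyRegular e g hreg.toIsWeaklyRegular) a ha G hGhom hGeval
      have hren : ∀ x ∈ Ksp g a, rename (Sum.inl : Fin e → Fin e ⊕ Fin m) x
          ∈ Submodule.span O Sset := by
        intro x hx
        induction hx using Submodule.span_induction with
        | mem q hq =>
          obtain ⟨v, hv, i, j, rfl⟩ := hq
          refine Submodule.subset_span ⟨rename Sum.inl v, hv.rename_isHomogeneous,
            Or.inl ⟨i, j, ?_⟩⟩
          simp [map_mul, map_sub, rename_C, rename_X]
        | zero => simp
        | add x y _ _ hx hy => rw [map_add]; exact Submodule.add_mem _ hx hy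
        | smul c x _ hx =>
          rw [smul_eq_C_mul, map_mul, rename_C, ← smul_eq_C_mul]
          exact Submodule.smul_mem _ c hx
      have hgoodmem : Fgood ∈ Submodule.span O Sset := by
        rw [← hG]
        exact hren G hGmem
      rw [hFeq]
      exact Submodule.add_mem _ hbadmem hgoodmem
    · intro hmem
      have := hkerS hmem
      simpa using this
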